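/- The elliptic Artin monoid M'(Ẽ₇^{(1,1)}) is cancellative: for all elements u, v, w of M'(Ẽ₇^{(1,1)}), u·v = u·w implies v = w, and v·u = w·u implies v = w. -/

import Mathlib

/-!
STATEMENT 18: The elliptic Artin monoid `M'(Ẽ₇^{(1,1)})` is cancellative.
-/

namespace EllipticE7Monoid

/-- Generators: `Sum.inl i` is `tᵢ` (`i ∈ ℤ`), `Sum.inr j` is `s_(j+1)`
(so `Sum.inr 0` is `s₁`, ..., `Sum.inr 6` is `s₇`). -/
abbrev S : Type := ℤ ⊕ Fin 7

def t (i : ℤ) : FreeMonoid S := FreeMonoid.of (Sum.inl i)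
def s (j : Fin 7) : FreeMonoid S := FreeMonoid.of (Sum.inr j)

/-- The pairs of (0-indexed) `s`-generators joined by an edge in the diagram,
i.e. satisfying a braid relation: (s₂,s₄), (s₄,s₅), (s₃,s₆), (s₆,s₇). -/
def braidPairs : List (Fin 7 × Fin 7) := [(1, 3), (3, 4), (2, 5), (5, 6)]

/-- The defining relations of `M'(Ẽ₇^{(1,1)})`:
`tᵢsⱼtᵢ = sⱼtᵢsⱼ` for `i ∈ ℤ` and `j ∈ {1,2,3}`;
`tᵢtᵢ₋₁ = tⱼtⱼ₋₁` for all `i, j ∈ ℤ`;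
braid relations `xyx = yxy` along the edges of the `s`-part of the diagram;
commutation relations between the remaining pairs of distinct `s`-generators;
and commutation of every `tᵢ` with `s₄, …, s₇`. -/
def rels : FreeMonoid S → FreeMonoid S → Prop := fun a b =>
  (∃ i : ℤ, ∃ j : Fin 7, j.val < 3 ∧ a = t i * s j * t i ∧ b = s j * t i * s j) ∨
  (∃ i j : ℤ, a = t i * t (i - 1) ∧ b = t j * t (j - 1)) ∨
  (∃ q ∈ braidPairs, a = s q.1 * s q.2 * s q.1 ∧ b = s q.2 * s q.1 * s q.2) ∨
  (∃ i j : Fin 7, i ≠ j ∧ (i, j) ∉ braidPairs ∧ (j, i) ∉ braidPairs ∧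
    a = s i * s j ∧ b = s j * s i) ∨
  (∃ i : ℤ, ∃ j : Fin 7, 3 ≤ j.val ∧ a = t i * s j ∧ b = s j * t i)

/-- The elliptic Artin monoid `M'(Ẽ₇^{(1,1)})`. -/
abbrev M := PresentedMonoid rels

set_option linter.dupNamespace false
set_option maxHeartbeats 1000000


abbrev W := FreeMonoid S

noncomputable abbrev π : W →* M := PresentedMonoid.mk rels

/-- One rewriting step (in either direction). -/
def OneStep (a b : W) : Prop :=
  ∃ l p q r, (rels p q ∨ rels q p) ∧ a = l * p * r ∧ b = l * q * r

lemma OneStep.symm {a b : W} (h : OneStep a b) : OneStep b a := by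
  obtain ⟨l, p, q, r, hpq, ha, hb⟩ := h
  exact ⟨l, q, p, r, hpq.symm, hb, ha⟩

abbrev Chain : W → W → Prop := Relation.ReflTransGen OneStep

lemma Chain.symm {a b : W} (h : Chain a b) : Chain b a := by
  induction h with
  | refl => exact Relation.ReflTransGen.refl
  | tail _ h2 ih => exact Relation.ReflTransGen.head h2.symm ih

lemma chain_mul_right {a b : W} (c : W) (h : Chain a b) : Chain (a * c) (b * c) := by
  induction h with
  | refl => exact Relation.ReflTransGen.refl
  | tail _ h2 ih =>
      refine ih.tail ?_
      obtain ⟨l, p, q, r, hpq, ha, hb⟩ := h2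
      exact ⟨l, p, q, r * c, hpq, by rw [ha]; simp [mul_assoc], by rw [hb]; simp [mul_assoc]⟩

lemma chain_mul_left {a b : W} (c : W) (h : Chain a b) : Chain (c * a) (c * b) := by
  induction h with
  | refl => exact Relation.ReflTransGen.refl
  | tail _ h2 ih =>
      refine ih.tail ?_
      obtain ⟨l, p, q, r, hpq, ha, hb⟩ := h2
      exact ⟨c * l, p, q, r, hpq, by rw [ha]; simp [mul_assoc], by rw [hb]; simp [mul_assoc]⟩

lemma pi_eq_iff_chain {a b : W} : π a = π b ↔ Chain a b := by
  constructor
  · intro h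
    have h' : (conGen rels) a b := (Con.eq (conGen rels)).mp h
    -- conGen rels is the smallest Con; show the Con built from Chain contains rels
    have : ConGen.Rel rels a b := by
      rwa [show (conGen rels) a b ↔ ConGen.Rel rels a b from Iff.rfl] at h'
    clear h h'
    induction this with
    | of x y hxy => exact Relation.ReflTransGen.single ⟨1, x, y, 1, Or.inl hxy, by simp, by simp⟩
    | refl x => exact Relation.ReflTransGen.refl
    | symm _ ih => exact ih.symm
    | trans _ _ ih1 ih2 => exact ih1.trans ih2
    | mul _ _ ih1 ih2 =>
        rename_i w x y z _ _
        exact (chain_mul_right y ih1).trans (chain_mul_left x ih2)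
  · intro h
    induction h with
    | refl => rfl
    | tail _ h2 ih =>
        obtain ⟨l, p, q, r, hpq, ha, hb⟩ := h2
        have hpq' : π p = π q := by
          rcases hpq with h | h
          · exact (Con.eq (conGen rels)).mpr (ConGen.Rel.of _ _ h)
          · exact ((Con.eq (conGen rels)).mpr (ConGen.Rel.of _ _ h)).symm
        rw [ih, ha, hb, map_mul, map_mul, map_mul, map_mul, hpq']

/-- Length is invariant under the relations. -/
lemma rels_length {a b : W} (h : rels a b) : a.length = b.length := by
  rcases h with ⟨i, j, _, ha, hb⟩ | ⟨i, j, ha, hb⟩ | ⟨q, _, ha, hb⟩ | ⟨i, j, _, _, _, ha, hb⟩ |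
    ⟨i, j, _, ha, hb⟩ <;> subst ha <;> subst hb <;> simp [t, s]

lemma chain_length {a b : W} (h : Chain a b) : a.length = b.length := by
  induction h with
  | refl => rfl
  | tail _ h2 ih =>
      obtain ⟨l, p, q, r, hpq, ha, hb⟩ := h2
      have : p.length = q.length := by
        rcases hpq with h | h
        · exact rels_length h
        · exact (rels_length h).symm
      rw [ih, ha, hb]; simp [this]

/-- Length descends to a function on M. -/
noncomputable def ℓ : M → ℕ := fun m =>
  (Quotient.exists_rep m).choose.length

lemma ℓ_pi (a : W) : ℓ (π a) = a.length := by
  have h : π ((Quotient.exists_rep (π a)).choose) = π a := (Quotient.exists_rep (π a)).choose_spec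
  exact chain_length (pi_eq_iff_chain.mp h)

lemma pi_surj (m : M) : ∃ a : W, π a = m := Quotient.exists_rep m



/-- Whether two s-generators braid. -/
def isBraid (i j : Fin 7) : Prop := (i, j) ∈ braidPairs ∨ (j, i) ∈ braidPairs

instance : DecidablePred (· ∈ braidPairs) := fun q => List.instDecidableMemOfLawfulBEq q _
instance (i j : Fin 7) : Decidable (isBraid i j) := by unfold isBraid; infer_instance

/-- The complement function of the right-complemented presentation. -/
def θ : S → S → W
  | Sum.inl i, Sum.inl j => if i = j then 1 else t (i - 1)
  | Sum.inl i, Sum.inr j => if j.val < 3 then s j * t i else s j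
  | Sum.inr j, Sum.inl i => if j.val < 3 then t i * s j else t i
  | Sum.inr i, Sum.inr j => if i = j then 1 else if isBraid i j then s j * s i else s j

lemma θ_self (x : S) : θ x x = 1 := by
  cases x <;> simp [θ]

/-- Elements of M. -/
noncomputable def T (i : ℤ) : M := π (t i)
noncomputable def Sg (j : Fin 7) : M := π (s j)

lemma rel_pi {a b : W} (h : rels a b) : π a = π b :=
  (Con.eq (conGen rels)).mpr (ConGen.Rel.of _ _ h)

lemma rel_tst (i : ℤ) (j : Fin 7) (h : j.val < 3) :
    T i * Sg j * T i = Sg j * T i * Sg j := by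
  have := rel_pi (Or.inl ⟨i, j, h, rfl, rfl⟩)
  simpa [T, Sg, map_mul] using this

lemma rel_tt (i j : ℤ) : T i * T (i - 1) = T j * T (j - 1) := by
  have := rel_pi (a := t i * t (i-1)) (b := t j * t (j-1)) (Or.inr (Or.inl ⟨i, j, rfl, rfl⟩))
  simpa [T, map_mul] using this

lemma rel_ss_braid {i j : Fin 7} (h : isBraid i j) :
    Sg i * Sg j * Sg i = Sg j * Sg i * Sg j := by
  rcases h with h | h
  · have := rel_pi (a := s i * s j * s i) (b := s j * s i * s j)
      (Or.inr (Or.inr (Or.inl ⟨(i, j), h, rfl, rfl⟩)))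
    simpa [Sg, map_mul] using this
  · have := rel_pi (a := s j * s i * s j) (b := s i * s j * s i)
      (Or.inr (Or.inr (Or.inl ⟨(j, i), h, rfl, rfl⟩)))
    simpa [Sg, map_mul] using this.symm

lemma rel_ss_comm {i j : Fin 7} (hne : i ≠ j) (h : ¬ isBraid i j) :
    Sg i * Sg j = Sg j * Sg i := by
  have := rel_pi (a := s i * s j) (b := s j * s i)
    (Or.inr (Or.inr (Or.inr (Or.inl ⟨i, j, hne, fun hc => h (Or.inl hc), fun hc => h (Or.inr hc),
      rfl, rfl⟩))))
  simpa [Sg, map_mul] using this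

lemma rel_ts_comm (i : ℤ) {j : Fin 7} (h : 3 ≤ j.val) : T i * Sg j = Sg j * T i := by
  have := rel_pi (a := t i * s j) (b := s j * t i)
    (Or.inr (Or.inr (Or.inr (Or.inr ⟨i, j, h, rfl, rfl⟩))))
  simpa [T, Sg, map_mul] using this

/-- Key structural form: every relation is `x·θ(x,y) = y·θ(y,x)`. -/
lemma relform {a b : W} (h : rels a b) :
    a = b ∨ ∃ x y : S, x ≠ y ∧ a = FreeMonoid.of x * θ x y ∧ b = FreeMonoid.of y * θ y x := by
  rcases h with ⟨i, j, hj, ha, hb⟩ | ⟨i, j, ha, hb⟩ | ⟨q, hq, ha, hb⟩ |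
      ⟨i, j, hne, h1, h2, ha, hb⟩ | ⟨i, j, hj, ha, hb⟩
  · refine Or.inr ⟨Sum.inl i, Sum.inr j, by simp, ?_, ?_⟩
    · rw [ha]; simp [θ, hj, t, s, mul_assoc]
    · rw [hb]; simp [θ, hj, t, s, mul_assoc]
  · by_cases hij : i = j
    · subst hij; exact Or.inl (ha.trans hb.symm)
    · have hji : ¬ j = i := fun hc => hij hc.symm
      refine Or.inr ⟨Sum.inl i, Sum.inl j, by simpa using hij, ?_, ?_⟩
      · rw [ha]; simp [θ, hij, t]
      · rw [hb]; simp [θ, hji, t]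
  · have hne : q.1 ≠ q.2 := by fin_cases hq <;> decide
    have hne' : ¬ q.2 = q.1 := fun hc => hne hc.symm
    have hb1 : isBraid q.1 q.2 := Or.inl hq
    have hb2 : isBraid q.2 q.1 := Or.inr hq
    refine Or.inr ⟨Sum.inr q.1, Sum.inr q.2, by simpa using hne, ?_, ?_⟩
    · rw [ha]; simp [θ, hne, hb1, s, mul_assoc]
    · rw [hb]; simp [θ, hne', hb2, s, mul_assoc]
  · have hnb : ¬ isBraid i j := fun hc => hc.elim h1 h2
    have hnb' : ¬ isBraid j i := fun hc => hnb (hc.elim Or.inr Or.inl)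
    have hne' : ¬ j = i := fun hc => hne hc.symm
    refine Or.inr ⟨Sum.inr i, Sum.inr j, by simpa using hne, ?_, ?_⟩
    · rw [ha]; simp [θ, hne, hnb, s]
    · rw [hb]; simp [θ, hne', hnb', s]
  · have hj' : ¬ j.val < 3 := by omega
    refine Or.inr ⟨Sum.inl i, Sum.inr j, by simp, ?_, ?_⟩
    · rw [ha]; simp [θ, hj', t, s]
    · rw [hb]; simp [θ, hj', t, s]

/-- θ relation: `x · θ x y = y · θ y x` in M. -/
lemma θ_rel (x y : S) : π (FreeMonoid.of x * θ x y) = π (FreeMonoid.of y * θ y x) := by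
  rcases x with i | i <;> rcases y with j | j
  · by_cases hij : i = j
    · subst hij; rfl
    · have hji : ¬ j = i := fun hc => hij hc.symm
      simp only [θ, if_neg hij, if_neg hji]
      exact rel_pi (Or.inr (Or.inl ⟨i, j, rfl, rfl⟩))
  · by_cases hj : j.val < 3
    · simp only [θ, if_pos hj]
      refine rel_pi (Or.inl ⟨i, j, hj, ?_, ?_⟩) <;> simp [t, s, mul_assoc]
    · simp only [θ, if_neg hj]
      exact rel_pi (Or.inr (Or.inr (Or.inr (Or.inr ⟨i, j, by omega, rfl, rfl⟩))))
  · by_cases hj : i.val < 3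
    · simp only [θ, if_pos hj]
      refine (rel_pi (Or.inl ⟨j, i, hj, ?_, ?_⟩)).symm <;> simp [t, s, mul_assoc]
    · simp only [θ, if_neg hj]
      exact (rel_pi (Or.inr (Or.inr (Or.inr (Or.inr ⟨j, i, by omega, rfl, rfl⟩))))).symm
  · by_cases hij : i = j
    · subst hij; rfl
    · have hji : ¬ j = i := fun hc => hij hc.symm
      by_cases hb : isBraid i j
      · have hb' : isBraid j i := hb.elim Or.inr Or.inl
        simp only [θ, if_neg hij, if_neg hji, if_pos hb, if_pos hb']
        rcases hb with h | h
        · refine rel_pi (Or.inr (Or.inr (Or.inl ⟨(i, j), h, ?_, ?_⟩))) <;> simp [s, mul_assoc]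
        · refine (rel_pi (Or.inr (Or.inr (Or.inl ⟨(j, i), h, ?_, ?_⟩)))).symm <;>
            simp [s, mul_assoc]
      · have hb' : ¬ isBraid j i := fun hc => hb (hc.elim Or.inr Or.inl)
        simp only [θ, if_neg hij, if_neg hji, if_neg hb, if_neg hb']
        exact rel_pi (Or.inr (Or.inr (Or.inr (Or.inl ⟨i, j, hij, fun hc => hb (Or.inl hc),
          fun hc => hb (Or.inr hc), rfl, rfl⟩))))





noncomputable def X (x : S) : M := π (FreeMonoid.of x)
noncomputable def Θ (x y : S) : M := π (θ x y)

lemma X_inl (i : ℤ) : X (Sum.inl i) = T i := rfl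
lemma X_inr (j : Fin 7) : X (Sum.inr j) = Sg j := rfl

lemma Θ_self (x : S) : Θ x x = 1 := by rw [Θ, θ_self, map_one]

lemma Θ_rel' (x y : S) : X x * Θ x y = X y * Θ y x := by
  simpa [X, Θ, map_mul] using θ_rel x y

lemma Θ_tt {i j : ℤ} (h : i ≠ j) : Θ (Sum.inl i) (Sum.inl j) = T (i - 1) := by
  rw [Θ, θ]; simp [h, T]

lemma Θ_ts_b {i : ℤ} {j : Fin 7} (h : j.val < 3) :
    Θ (Sum.inl i) (Sum.inr j) = Sg j * T i := by
  rw [Θ, θ]; simp [h, T, Sg, map_mul]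

lemma Θ_ts_c {i : ℤ} {j : Fin 7} (h : ¬ j.val < 3) :
    Θ (Sum.inl i) (Sum.inr j) = Sg j := by
  rw [Θ, θ]; simp [h, Sg]

lemma Θ_st_b {i : ℤ} {j : Fin 7} (h : j.val < 3) :
    Θ (Sum.inr j) (Sum.inl i) = T i * Sg j := by
  rw [Θ, θ]; simp [h, T, Sg, map_mul]

lemma Θ_st_c {i : ℤ} {j : Fin 7} (h : ¬ j.val < 3) :
    Θ (Sum.inr j) (Sum.inl i) = T i := by
  rw [Θ, θ]; simp [h, T]

lemma Θ_ss_b {i j : Fin 7} (hne : i ≠ j) (h : isBraid i j) :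
    Θ (Sum.inr i) (Sum.inr j) = Sg j * Sg i := by
  rw [Θ, θ]; simp [hne, h, Sg, map_mul]

lemma Θ_ss_c {i j : Fin 7} (hne : i ≠ j) (h : ¬ isBraid i j) :
    Θ (Sum.inr i) (Sum.inr j) = Sg j := by
  rw [Θ, θ]; simp [hne, h, Sg]

/-- length on M -/
lemma ℓ_mul (m n : M) : ℓ (m * n) = ℓ m + ℓ n := by
  obtain ⟨a, rfl⟩ := pi_surj m
  obtain ⟨b, rfl⟩ := pi_surj n
  rw [← map_mul, ℓ_pi, ℓ_pi, ℓ_pi, FreeMonoid.length_mul]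

lemma ℓ_X (x : S) : ℓ (X x) = 1 := by rw [X, ℓ_pi]; rfl
lemma ℓ_T (i : ℤ) : ℓ (T i) = 1 := ℓ_X (Sum.inl i)
lemma ℓ_Sg (j : Fin 7) : ℓ (Sg j) = 1 := ℓ_X (Sum.inr j)

/-- Applied (right-associated) versions of the relations. -/
lemma tst (i : ℤ) {j : Fin 7} (h : j.val < 3) (z : M) :
    T i * (Sg j * (T i * z)) = Sg j * (T i * (Sg j * z)) := by
  rw [← mul_assoc, ← mul_assoc, ← mul_assoc, ← mul_assoc, rel_tst i j h]

lemma ttr (i j : ℤ) (z : M) : T i * (T (i - 1) * z) = T j * (T (j - 1) * z) := by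
  rw [← mul_assoc, ← mul_assoc, rel_tt i j]

lemma ssb {i j : Fin 7} (h : isBraid i j) (z : M) :
    Sg i * (Sg j * (Sg i * z)) = Sg j * (Sg i * (Sg j * z)) := by
  rw [← mul_assoc, ← mul_assoc, ← mul_assoc, ← mul_assoc, rel_ss_braid h]

lemma ssc {i j : Fin 7} (hne : i ≠ j) (h : ¬ isBraid i j) (z : M) :
    Sg i * (Sg j * z) = Sg j * (Sg i * z) := by
  rw [← mul_assoc, ← mul_assoc, rel_ss_comm hne h]

lemma tsc (i : ℤ) {j : Fin 7} (h : 3 ≤ j.val) (z : M) :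
    T i * (Sg j * z) = Sg j * (T i * z) := by
  rw [← mul_assoc, ← mul_assoc, rel_ts_comm i h]

lemma stc (i : ℤ) {j : Fin 7} (h : 3 ≤ j.val) (z : M) :
    Sg j * (T i * z) = T i * (Sg j * z) := (tsc i h z).symm

def StarProp (N : ℕ) : Prop :=
  ∀ (x y : S) (u v : M), 1 + ℓ u ≤ N → X x * u = X y * v →
    ∃ w : M, u = Θ x y * w ∧ v = Θ y x * w



section CubeHelpers

variable {N : ℕ}

/-- Peel an identical head letter. -/
lemma peel (hstar : ∀ m, m < N → StarProp m) {a : S} {u v : M}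
    (hl : 1 + ℓ u < N) (h : X a * u = X a * v) : u = v := by
  obtain ⟨w, h1, h2⟩ := hstar (1 + ℓ u) hl a a u v le_rfl h
  rw [h1, h2, Θ_self]

lemma peelT (hstar : ∀ m, m < N → StarProp m) {a : ℤ} {u v : M}
    (hl : 1 + ℓ u < N) (h : T a * u = T a * v) : u = v :=
  peel hstar (a := Sum.inl a) hl h

lemma peelS (hstar : ∀ m, m < N → StarProp m) {j : Fin 7} {u v : M}
    (hl : 1 + ℓ u < N) (h : Sg j * u = Sg j * v) : u = v :=
  peel hstar (a := Sum.inr j) hl h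

/-- Reverse heads t_a vs t_b. -/
lemma rev_tt (hstar : ∀ m, m < N → StarProp m) {a b : ℤ} (hab : a ≠ b) {u v : M}
    (hl : 1 + ℓ u < N) (h : T a * u = T b * v) :
    ∃ w, u = T (a - 1) * w ∧ v = T (b - 1) * w := by
  obtain ⟨w, h1, h2⟩ := hstar (1 + ℓ u) hl (Sum.inl a) (Sum.inl b) u v le_rfl h
  rw [Θ_tt hab] at h1
  rw [Θ_tt (Ne.symm hab)] at h2
  exact ⟨w, h1, h2⟩

/-- Reverse heads t_a vs s_j when j < 3 (braid). -/
lemma rev_ts_b (hstar : ∀ m, m < N → StarProp m) {a : ℤ} {j : Fin 7} (hj : j.val < 3)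
    {u v : M} (hl : 1 + ℓ u < N) (h : T a * u = Sg j * v) :
    ∃ w, u = Sg j * (T a * w) ∧ v = T a * (Sg j * w) := by
  obtain ⟨w, h1, h2⟩ := hstar (1 + ℓ u) hl (Sum.inl a) (Sum.inr j) u v le_rfl h
  rw [Θ_ts_b hj, mul_assoc] at h1
  rw [Θ_st_b hj, mul_assoc] at h2
  exact ⟨w, h1, h2⟩

/-- Reverse heads t_a vs s_j when 3 ≤ j (commutation). -/
lemma rev_ts_c (hstar : ∀ m, m < N → StarProp m) {a : ℤ} {j : Fin 7} (hj : ¬ j.val < 3)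
    {u v : M} (hl : 1 + ℓ u < N) (h : T a * u = Sg j * v) :
    ∃ w, u = Sg j * w ∧ v = T a * w := by
  obtain ⟨w, h1, h2⟩ := hstar (1 + ℓ u) hl (Sum.inl a) (Sum.inr j) u v le_rfl h
  rw [Θ_ts_c hj] at h1
  rw [Θ_st_c hj] at h2
  exact ⟨w, h1, h2⟩

/-- Reverse heads s_i vs s_j, braid case. -/
lemma rev_ss_b (hstar : ∀ m, m < N → StarProp m) {i j : Fin 7} (hne : i ≠ j)
    (hbr : isBraid i j) {u v : M} (hl : 1 + ℓ u < N) (h : Sg i * u = Sg j * v) :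
    ∃ w, u = Sg j * (Sg i * w) ∧ v = Sg i * (Sg j * w) := by
  obtain ⟨w, h1, h2⟩ := hstar (1 + ℓ u) hl (Sum.inr i) (Sum.inr j) u v le_rfl h
  rw [Θ_ss_b hne hbr, mul_assoc] at h1
  rw [Θ_ss_b (Ne.symm hne) (hbr.elim Or.inr Or.inl), mul_assoc] at h2
  exact ⟨w, h1, h2⟩

/-- Reverse heads s_i vs s_j, commutation case. -/
lemma rev_ss_c (hstar : ∀ m, m < N → StarProp m) {i j : Fin 7} (hne : i ≠ j)
    (hnb : ¬ isBraid i j) {u v : M} (hl : 1 + ℓ u < N) (h : Sg i * u = Sg j * v) :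
    ∃ w, u = Sg j * w ∧ v = Sg i * w := by
  obtain ⟨w, h1, h2⟩ := hstar (1 + ℓ u) hl (Sum.inr i) (Sum.inr j) u v le_rfl h
  rw [Θ_ss_c hne hnb] at h1
  rw [Θ_ss_c (Ne.symm hne) (fun hc => hnb (hc.elim Or.inr Or.inl))] at h2
  exact ⟨w, h1, h2⟩

/-- Cancel a word on the left. -/
lemma cancel_word (hstar : ∀ m, m < N → StarProp m) (z : W) {d e : M}
    (hl : ℓ (π z * d) < N) (h : π z * d = π z * e) : d = e := by
  induction z using FreeMonoid.inductionOn' generalizing d e with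
  | one => simpa using h
  | of_mul x0 rest ih =>
      rw [map_mul, mul_assoc, mul_assoc] at h
      rw [map_mul, mul_assoc] at hl
      have hx : π (FreeMonoid.of x0) = X x0 := rfl
      rw [hx] at h hl
      have hl1 : 1 + ℓ (π rest * d) < N := by
        rw [ℓ_mul, ℓ_X] at hl; omega
      have := peel hstar hl1 h
      apply ih _ this
      rw [ℓ_mul, ℓ_X] at hl
      omega

def CubeAt (N : ℕ) (x₁ x y : S) : Prop :=
  ∀ d e : M, ℓ (Θ x₁ x * d) < N → Θ x₁ x * d = Θ x₁ y * e →
    ∃ w, Θ x x₁ * d = Θ x y * w ∧ Θ y x₁ * e = Θ y x * w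

lemma cubeAt_swap {x₁ x y : S} (h : CubeAt N x₁ x y) : CubeAt N x₁ y x := by
  intro d e hl H
  have hll : ℓ (Θ x₁ x * e) < N := by
    have := congrArg ℓ H
    omega
  obtain ⟨w, g1, g2⟩ := h e d hll H.symm
  exact ⟨w, g2, g1⟩

lemma cubeAt_left (x y : S) : CubeAt N x x y := by
  intro d e _ H
  rw [Θ_self, one_mul] at H
  exact ⟨e, by rw [Θ_self, one_mul]; exact H, rfl⟩

lemma cubeAt_right (x y : S) : CubeAt N y x y := by
  intro d e _ H
  rw [Θ_self, one_mul] at H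
  exact ⟨d, rfl, by rw [Θ_self, one_mul]; exact H.symm⟩

lemma cubeAt_xy (hstar : ∀ m, m < N → StarProp m) (x₁ x : S) : CubeAt N x₁ x x := by
  intro d e hl H
  have hd : d = e := cancel_word hstar (θ x₁ x) (by rw [← Θ]; exact hl) (by rw [Θ] at H; exact H)
  subst hd
  exact ⟨Θ x x₁ * d, by rw [Θ_self, one_mul], by rw [Θ_self, one_mul]⟩

end CubeHelpers


section CubeCases

variable {N : ℕ}

lemma cube_ttt (hstar : ∀ m, m < N → StarProp m) {a b c : ℤ}
    (hab : a ≠ b) (hac : a ≠ c) (hbc : b ≠ c) :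
    CubeAt N (Sum.inl a) (Sum.inl b) (Sum.inl c) := by
  intro d e hl H
  rw [Θ_tt hab] at hl H
  rw [Θ_tt hac] at H
  rw [ℓ_mul, ℓ_T] at hl
  have hd : d = e := peelT hstar (by omega) H
  rw [Θ_tt (Ne.symm hab), Θ_tt (Ne.symm hac), Θ_tt hbc, Θ_tt (Ne.symm hbc)]
  exact ⟨d, rfl, by rw [hd]⟩

lemma cube_tts (hstar : ∀ m, m < N → StarProp m) {a b : ℤ} {j : Fin 7} (hab : a ≠ b) :
    CubeAt N (Sum.inl a) (Sum.inl b) (Sum.inr j) := by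
  intro d e hl H
  rw [Θ_tt hab] at hl H
  rw [ℓ_mul, ℓ_T] at hl
  rw [Θ_tt (Ne.symm hab)]
  by_cases hj : j.val < 3
  · rw [Θ_ts_b hj, mul_assoc] at H
    rw [Θ_ts_b hj, Θ_st_b hj, Θ_st_b hj]
    simp only [mul_assoc]
    -- H : T (a-1) * d = Sg j * (T a * e)
    obtain ⟨r₁, hd1, he1⟩ := rev_ts_b hstar hj (by omega) H
    have L1 := congrArg ℓ hd1
    rw [ℓ_mul, ℓ_mul, ℓ_Sg, ℓ_T] at L1
    -- he1 : T a * e = T (a-1) * (Sg j * r₁)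
    have L2 := congrArg ℓ he1
    rw [ℓ_mul, ℓ_mul, ℓ_mul, ℓ_Sg, ℓ_T, ℓ_T] at L2
    obtain ⟨r₂, he2, hsr⟩ := rev_tt hstar (by omega : a ≠ a - 1) (by omega) he1
    -- he2 : e = T (a-1) * r₂ ; hsr : Sg j * r₁ = T (a-1-1) * r₂
    have L3 := congrArg ℓ hsr
    rw [ℓ_mul, ℓ_mul, ℓ_Sg, ℓ_T] at L3
    obtain ⟨r₃, hr2, hr1⟩ := rev_ts_b hstar hj (by omega) hsr.symm
    -- hr2 : r₂ = Sg j * (T (a-1-1) * r₃) ; hr1 : r₁ = T (a-1-1) * (Sg j * r₃)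
    refine ⟨T (b-1) * (Sg j * (T (b-1-1) * r₃)), ?_, ?_⟩
    · rw [hd1, hr1]
      rw [ttr (a-1) (b-1), tst (b-1) hj, ← tst (b-1-1) hj, ttr (b-1) b]
    · rw [he2, hr2]
      rw [← tst (a-1) hj, ttr a b, ttr (a-1) (b-1), tst (b-1) hj]
  · rw [Θ_ts_c hj] at H
    rw [Θ_ts_c hj, Θ_st_c hj, Θ_st_c hj]
    -- H : T (a-1) * d = Sg j * e
    obtain ⟨r₁, hd1, he1⟩ := rev_ts_c hstar hj (by omega) H
    -- hd1 : d = Sg j * r₁ ; he1 : e = T (a-1) * r₁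
    refine ⟨T (b-1) * r₁, ?_, ?_⟩
    · rw [hd1, tsc (b-1) (by omega)]
    · rw [he1, ← mul_assoc, ← mul_assoc, rel_tt a b]

end CubeCases


lemma braid_not_lt3 : ∀ j k : Fin 7, isBraid j k → ¬(j.val < 3 ∧ k.val < 3) := by decide

lemma no_triangle : ∀ m j k : Fin 7, isBraid m j → isBraid m k → isBraid j k → False := by decide

lemma isBraid_symm {j k : Fin 7} (h : isBraid j k) : isBraid k j := h.elim Or.inr Or.inl

lemma not_isBraid_symm {j k : Fin 7} (h : ¬ isBraid j k) : ¬ isBraid k j :=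
  fun hc => h (isBraid_symm hc)

section TSS
variable {N : ℕ}

lemma cube_tss (hstar : ∀ m, m < N → StarProp m) {a : ℤ} {j k : Fin 7} (hjk : j ≠ k) :
    CubeAt N (Sum.inl a) (Sum.inr j) (Sum.inr k) := by
  have hkj := hjk.symm
  intro d e hl H
  by_cases hj : j.val < 3 <;> by_cases hk : k.val < 3 <;> by_cases hbr : isBraid j k
  · exact absurd ⟨hj, hk⟩ (braid_not_lt3 j k hbr)
  · -- C4-1 : j<3, k<3, comm
    have hnb := hbr
    have hnb' := not_isBraid_symm hnb
    rw [Θ_ts_b hj] at hl H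
    rw [Θ_ts_b hk] at H
    simp only [mul_assoc] at H
    simp only [ℓ_mul, ℓ_Sg, ℓ_T] at hl
    rw [Θ_st_b hj, Θ_st_b hk, Θ_ss_c hjk hnb, Θ_ss_c hkj hnb']
    simp only [mul_assoc]
    obtain ⟨r₁, h1, h2⟩ := rev_ss_c hstar hjk hnb
      (by simp only [ℓ_mul, ℓ_T]; omega) H
    have L1 := congrArg ℓ h1; simp only [ℓ_mul, ℓ_Sg, ℓ_T] at L1
    obtain ⟨r₂, hd, h3⟩ := rev_ts_b hstar hk (by omega) h1
    have L2 := congrArg ℓ hd; simp only [ℓ_mul, ℓ_Sg, ℓ_T] at L2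
    rw [h3] at h2
    have L3 := congrArg ℓ h2; simp only [ℓ_mul, ℓ_Sg, ℓ_T] at L3
    obtain ⟨ρ, he, h4⟩ := rev_ts_b hstar hj (by omega) h2
    have h5 := peelT hstar (by simp only [ℓ_mul, ℓ_Sg]; omega) h4
    obtain ⟨r₄, h6, h7⟩ := rev_ss_c hstar hkj hnb' (by omega) h5
    refine ⟨T a * (Sg k * (Sg j * (T a * r₄))), ?_, ?_⟩
    · rw [hd, h6, ssc hjk hnb, ← tst a hj r₄, tst a hk]
    · rw [he, h7, ssc hkj hnb', ← tst a hk r₄, tst a hj, ssc hjk hnb]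
  · -- C4-2 : j<3, ¬k<3, braid
    rw [Θ_ts_b hj] at hl H
    rw [Θ_ts_c hk] at H
    simp only [mul_assoc] at H
    simp only [ℓ_mul, ℓ_Sg, ℓ_T] at hl
    rw [Θ_st_b hj, Θ_st_c hk, Θ_ss_b hjk hbr, Θ_ss_b hkj (isBraid_symm hbr)]
    simp only [mul_assoc]
    -- H : Sg j * (T a * d) = Sg k * e
    obtain ⟨r₁, h1, he0⟩ := rev_ss_b hstar hjk hbr
      (by simp only [ℓ_mul, ℓ_T]; omega) H
    -- h1 : T a * d = Sg k * (Sg j * r₁) ; he0 : e = Sg j * (Sg k * r₁)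
    have L1 := congrArg ℓ h1; simp only [ℓ_mul, ℓ_Sg, ℓ_T] at L1
    obtain ⟨r₂, hd0, h3⟩ := rev_ts_c hstar hk (by omega) h1
    -- hd0 : d = Sg k * r₂ ; h3 : Sg j * r₁ = T a * r₂
    have L2 := congrArg ℓ h3; simp only [ℓ_mul, ℓ_Sg, ℓ_T] at L2
    obtain ⟨ρ, h4, h5⟩ := rev_ts_b hstar hj (by omega) h3.symm
    -- h4 : r₂ = Sg j * (T a * ρ) ; h5 : r₁ = T a * (Sg j * ρ)
    rw [h4] at hd0
    rw [h5] at he0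
    refine ⟨T a * (Sg j * (Sg k * ρ)), ?_, ?_⟩
    · rw [hd0, ssb hbr, ← tsc a (by omega : 3 ≤ k.val) ρ,
        tsc a (by omega : 3 ≤ k.val) (Sg j * (T a * (Sg k * ρ))), tst a hj]
    · rw [he0, ← tsc a (by omega : 3 ≤ k.val) (Sg j * ρ),
        tst a hj (Sg k * (Sg j * ρ)), ssb hbr ρ,
        tsc a (by omega : 3 ≤ k.val) (Sg j * (Sg k * ρ))]
  · -- C4-3 : j<3, ¬k<3, comm
    have hnb' := not_isBraid_symm hbr
    rw [Θ_ts_b hj] at hl H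
    rw [Θ_ts_c hk] at H
    simp only [mul_assoc] at H
    simp only [ℓ_mul, ℓ_Sg, ℓ_T] at hl
    rw [Θ_st_b hj, Θ_st_c hk, Θ_ss_c hjk hbr, Θ_ss_c hkj hnb']
    simp only [mul_assoc]
    -- H : Sg j * (T a * d) = Sg k * e
    obtain ⟨r₁, h1, he0⟩ := rev_ss_c hstar hjk hbr
      (by simp only [ℓ_mul, ℓ_T]; omega) H
    -- h1 : T a * d = Sg k * r₁ ; he0 : e = Sg j * r₁
    have L1 := congrArg ℓ h1; simp only [ℓ_mul, ℓ_Sg, ℓ_T] at L1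
    obtain ⟨r₂, hd0, h3⟩ := rev_ts_c hstar hk (by omega) h1
    -- hd0 : d = Sg k * r₂ ; h3 : r₁ = T a * r₂
    rw [h3] at he0
    refine ⟨T a * (Sg j * r₂), ?_, ?_⟩
    · rw [hd0, ssc hjk hbr, tsc a (by omega : 3 ≤ k.val)]
    · rw [he0, tst a hj]
  · -- C4-4 : ¬j<3, k<3, braid
    rw [Θ_ts_c hj] at hl H
    rw [Θ_ts_b hk] at H
    simp only [mul_assoc] at H
    simp only [ℓ_mul, ℓ_Sg, ℓ_T] at hl
    rw [Θ_st_c hj, Θ_st_b hk, Θ_ss_b hjk hbr, Θ_ss_b hkj (isBraid_symm hbr)]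
    simp only [mul_assoc]
    -- H : Sg j * d = Sg k * (T a * e)
    obtain ⟨r₁, hd0, h1⟩ := rev_ss_b hstar hjk hbr
      (by omega) H
    -- hd0 : d = Sg k * (Sg j * r₁) ; h1 : T a * e = Sg j * (Sg k * r₁)
    have L0 := congrArg ℓ hd0; simp only [ℓ_mul, ℓ_Sg, ℓ_T] at L0
    have L1 := congrArg ℓ h1; simp only [ℓ_mul, ℓ_Sg, ℓ_T] at L1
    obtain ⟨ρ, he0, h2⟩ := rev_ts_c hstar hj (by omega) h1
    -- he0 : e = Sg j * ρ ; h2 : Sg k * r₁ = T a * ρ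
    have L2 := congrArg ℓ h2; simp only [ℓ_mul, ℓ_Sg, ℓ_T] at L2
    obtain ⟨r₂, h3, h4⟩ := rev_ts_b hstar hk (by omega) h2.symm
    -- h3 : ρ = Sg k * (T a * r₂) ; h4 : r₁ = T a * (Sg k * r₂)
    rw [h4] at hd0
    rw [h3] at he0
    refine ⟨T a * (Sg k * (Sg j * r₂)), ?_, ?_⟩
    · rw [hd0, ← tsc a (by omega : 3 ≤ j.val) (Sg k * r₂),
        tst a hk (Sg j * (Sg k * r₂)), ssb (isBraid_symm hbr) r₂,
        tsc a (by omega : 3 ≤ j.val) (Sg k * (Sg j * r₂))]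
    · rw [he0, ssb (isBraid_symm hbr) (T a * r₂), ← tsc a (by omega : 3 ≤ j.val) r₂,
        tsc a (by omega : 3 ≤ j.val) (Sg k * (T a * (Sg j * r₂))), tst a hk]
  · -- C4-5 : ¬j<3, k<3, comm
    have hnb' := not_isBraid_symm hbr
    rw [Θ_ts_c hj] at hl H
    rw [Θ_ts_b hk] at H
    simp only [mul_assoc] at H
    simp only [ℓ_mul, ℓ_Sg, ℓ_T] at hl
    rw [Θ_st_c hj, Θ_st_b hk, Θ_ss_c hjk hbr, Θ_ss_c hkj hnb']
    simp only [mul_assoc]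
    -- H : Sg j * d = Sg k * (T a * e)
    obtain ⟨r₁, hd0, h1⟩ := rev_ss_c hstar hjk hbr (by omega) H
    -- hd0 : d = Sg k * r₁ ; h1 : T a * e = Sg j * r₁
    have L0 := congrArg ℓ hd0; simp only [ℓ_mul, ℓ_Sg, ℓ_T] at L0
    have L1 := congrArg ℓ h1; simp only [ℓ_mul, ℓ_Sg, ℓ_T] at L1
    obtain ⟨ρ, he0, h2⟩ := rev_ts_c hstar hj (by omega) h1
    -- he0 : e = Sg j * ρ ; h2 : r₁ = T a * ρ
    rw [h2] at hd0
    refine ⟨T a * (Sg k * ρ), ?_, ?_⟩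
    · rw [hd0, tst a hk]
    · rw [he0, ssc hkj hnb', ← tsc a (by omega : 3 ≤ j.val) (Sg k * ρ)]
  · -- C4-6 : ¬j<3, ¬k<3, braid
    rw [Θ_ts_c hj] at hl H
    rw [Θ_ts_c hk] at H
    simp only [ℓ_mul, ℓ_Sg, ℓ_T] at hl
    rw [Θ_st_c hj, Θ_st_c hk, Θ_ss_b hjk hbr, Θ_ss_b hkj (isBraid_symm hbr)]
    simp only [mul_assoc]
    -- H : Sg j * d = Sg k * e
    obtain ⟨r₁, hd0, he0⟩ := rev_ss_b hstar hjk hbr (by omega) H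
    -- hd0 : d = Sg k * (Sg j * r₁) ; he0 : e = Sg j * (Sg k * r₁)
    refine ⟨T a * r₁, ?_, ?_⟩
    · rw [hd0, tsc a (by omega : 3 ≤ k.val), tsc a (by omega : 3 ≤ j.val)]
    · rw [he0, tsc a (by omega : 3 ≤ j.val), tsc a (by omega : 3 ≤ k.val)]
  · -- C4-7 : ¬j<3, ¬k<3, comm
    have hnb' := not_isBraid_symm hbr
    rw [Θ_ts_c hj] at hl H
    rw [Θ_ts_c hk] at H
    simp only [ℓ_mul, ℓ_Sg, ℓ_T] at hl
    rw [Θ_st_c hj, Θ_st_c hk, Θ_ss_c hjk hbr, Θ_ss_c hkj hnb']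
    obtain ⟨r₁, hd0, he0⟩ := rev_ss_c hstar hjk hbr (by omega) H
    refine ⟨T a * r₁, ?_, ?_⟩
    · rw [hd0, tsc a (by omega : 3 ≤ k.val)]
    · rw [he0, tsc a (by omega : 3 ≤ j.val)]

end TSS


section STT
variable {N : ℕ}

lemma cube_stt (hstar : ∀ m, m < N → StarProp m) {b c : ℤ} {m : Fin 7} (hbc : b ≠ c) :
    CubeAt N (Sum.inr m) (Sum.inl b) (Sum.inl c) := by
  intro d e hl H
  by_cases hm : m.val < 3
  · -- C5a
    simp only [Θ_st_b hm] at hl H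
    simp only [mul_assoc] at H
    simp only [ℓ_mul, ℓ_Sg, ℓ_T] at hl
    rw [Θ_ts_b hm, Θ_ts_b hm, Θ_tt hbc, Θ_tt (Ne.symm hbc)]
    simp only [mul_assoc]
    -- H : T b * (Sg m * d) = T c * (Sg m * e)
    obtain ⟨r₁, h1, h2⟩ := rev_tt hstar hbc (by simp only [ℓ_mul, ℓ_Sg]; omega) H
    have L1 := congrArg ℓ h1; simp only [ℓ_mul, ℓ_Sg, ℓ_T] at L1
    obtain ⟨r₂, h3, hd0⟩ := rev_ts_b hstar hm (by omega) h1.symm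
    -- h3 : r₁ = Sg m * (T (b-1) * r₂) ; hd0 : d = T (b-1) * (Sg m * r₂)
    have L2 := congrArg ℓ h3; simp only [ℓ_mul, ℓ_Sg, ℓ_T] at L2
    rw [h3] at h2
    have L3 := congrArg ℓ h2; simp only [ℓ_mul, ℓ_Sg, ℓ_T] at L3
    obtain ⟨ρ, h4, he0⟩ := rev_ts_b hstar hm
      (by simp only [ℓ_mul, ℓ_Sg, ℓ_T]; omega) h2.symm
    -- h4 : Sg m * (T (b-1) * r₂) = Sg m * (T (c-1) * ρ) ; he0 : e = T (c-1) * (Sg m * ρ)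
    have h5 := peelS hstar (by simp only [ℓ_mul, ℓ_Sg, ℓ_T]; omega) h4
    obtain ⟨σ', h6, h7⟩ := rev_tt hstar (by omega : b - 1 ≠ c - 1)
      (by omega) h5
    refine ⟨Sg m * (T (b-1) * (T (b-1-1) * (Sg m * σ'))), ?_, ?_⟩
    · rw [hd0, h6, ttr b (b-1), tst (b-1-1) hm σ', ← tst (b-1) hm]
    · rw [he0, h7, ttr c (c-1), tst (c-1-1) hm σ', ← tst (c-1) hm,
        ttr (b-1) (c-1) (Sg m * σ')]
  · -- C5b
    simp only [Θ_st_c hm] at hl H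
    simp only [ℓ_mul, ℓ_T] at hl
    rw [Θ_ts_c hm, Θ_ts_c hm, Θ_tt hbc, Θ_tt (Ne.symm hbc)]
    obtain ⟨r₁, hd0, he0⟩ := rev_tt hstar hbc (by omega) H
    refine ⟨Sg m * r₁, ?_, ?_⟩
    · rw [hd0, tsc (b-1) (by omega : 3 ≤ m.val)]
    · rw [he0, tsc (c-1) (by omega : 3 ≤ m.val)]

lemma cube_sts (hstar : ∀ m, m < N → StarProp m) {b : ℤ} {m k : Fin 7} (hmk : m ≠ k) :
    CubeAt N (Sum.inr m) (Sum.inl b) (Sum.inr k) := by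
  have hkm := hmk.symm
  intro d e hl H
  by_cases hm : m.val < 3 <;> by_cases hk : k.val < 3 <;> by_cases hbr : isBraid m k
  · exact absurd ⟨hm, hk⟩ (braid_not_lt3 m k hbr)
  · -- C6-1 : m<3, k<3, comm
    have hnb' := not_isBraid_symm hbr
    rw [Θ_st_b hm] at hl H
    rw [Θ_ss_c hmk hbr] at H
    simp only [mul_assoc] at H
    simp only [ℓ_mul, ℓ_Sg, ℓ_T] at hl
    rw [Θ_ts_b hm, Θ_ts_b hk, Θ_ss_c hkm hnb', Θ_st_b hk]
    simp only [mul_assoc]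
    -- H : T b * (Sg m * d) = Sg k * e
    obtain ⟨r₁, h1, he0⟩ := rev_ts_b hstar hk (by simp only [ℓ_mul, ℓ_Sg]; omega) H
    -- h1 : Sg m * d = Sg k * (T b * r₁) ; he0 : e = T b * (Sg k * r₁)
    have L1 := congrArg ℓ h1; simp only [ℓ_mul, ℓ_Sg, ℓ_T] at L1
    obtain ⟨ρ, hd0, h2⟩ := rev_ss_c hstar hmk hbr (by omega) h1
    -- hd0 : d = Sg k * ρ ; h2 : T b * r₁ = Sg m * ρ
    have L2 := congrArg ℓ h2; simp only [ℓ_mul, ℓ_Sg, ℓ_T] at L2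
    obtain ⟨σ', h3, h4⟩ := rev_ts_b hstar hm (by omega) h2
    -- h3 : r₁ = Sg m * (T b * σ') ; h4 : ρ = T b * (Sg m * σ')
    rw [h4] at hd0
    rw [h3] at he0
    refine ⟨Sg m * (T b * (Sg k * σ')), ?_, ?_⟩
    · rw [hd0, tst b hk (Sg m * σ'), ssc hmk hbr (T b * (Sg k * (Sg m * σ'))),
        ssc hkm hnb' σ', ← tst b hm (Sg k * σ')]
    · rw [he0, ssc hkm hnb' (T b * σ'), ← tst b hm (Sg k * (T b * σ')),
        tst b hk σ', ssc hmk hbr (T b * (Sg k * σ'))]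
  · -- C6-2 : m<3, ¬k<3, braid
    rw [Θ_st_b hm] at hl H
    rw [Θ_ss_b hmk hbr] at H
    simp only [mul_assoc] at H
    simp only [ℓ_mul, ℓ_Sg, ℓ_T] at hl
    rw [Θ_ts_b hm, Θ_ts_c hk, Θ_ss_b hkm (isBraid_symm hbr), Θ_st_c hk]
    simp only [mul_assoc]
    -- H : T b * (Sg m * d) = Sg k * (Sg m * e)
    obtain ⟨ρ₁, h1, h2⟩ := rev_ts_c hstar hk (by simp only [ℓ_mul, ℓ_Sg]; omega) H
    -- h1 : Sg m * d = Sg k * ρ₁ ; h2 : Sg m * e = T b * ρ₁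
    have L1 := congrArg ℓ h1; simp only [ℓ_mul, ℓ_Sg, ℓ_T] at L1
    obtain ⟨ρ₂, hd0, h3⟩ := rev_ss_b hstar hmk hbr (by omega) h1
    -- hd0 : d = Sg k * (Sg m * ρ₂) ; h3 : ρ₁ = Sg m * (Sg k * ρ₂)
    have L3 := congrArg ℓ h3; simp only [ℓ_mul, ℓ_Sg, ℓ_T] at L3
    rw [h3] at h2
    have L2 := congrArg ℓ h2; simp only [ℓ_mul, ℓ_Sg, ℓ_T] at L2
    obtain ⟨ρ₃, h4, he0⟩ := rev_ts_b hstar hm (by simp only [ℓ_mul, ℓ_Sg, ℓ_T]; omega) h2.symm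
    -- h4 : Sg m * (Sg k * ρ₂) = Sg m * (T b * ρ₃) ; he0 : e = T b * (Sg m * ρ₃)
    have h5 := peelS hstar (by simp only [ℓ_mul, ℓ_Sg]; omega) h4
    have L5 := congrArg ℓ h5; simp only [ℓ_mul, ℓ_Sg, ℓ_T] at L5
    obtain ⟨ρ₄, h6, h7⟩ := rev_ts_c hstar hk (by omega) h5.symm
    -- h6 : ρ₃ = Sg k * ρ₄ ; h7 : ρ₂ = T b * ρ₄
    rw [h7] at hd0
    rw [h6] at he0
    refine ⟨Sg m * (T b * (Sg k * (Sg m * ρ₄))), ?_, ?_⟩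
    · rw [hd0, tsc b (by omega : 3 ≤ k.val) (Sg m * (T b * ρ₄)), tst b hm ρ₄,
        ssb hbr (T b * (Sg m * ρ₄)), ← tsc b (by omega : 3 ≤ k.val) (Sg m * ρ₄)]
    · rw [he0, ← tsc b (by omega : 3 ≤ k.val) (Sg m * (Sg k * ρ₄)), ← ssb hbr ρ₄,
        ← tst b hm (Sg k * (Sg m * ρ₄))]
  · -- C6-3 : m<3, ¬k<3, comm
    have hnb' := not_isBraid_symm hbr
    rw [Θ_st_b hm] at hl H
    rw [Θ_ss_c hmk hbr] at H
    simp only [mul_assoc] at H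
    simp only [ℓ_mul, ℓ_Sg, ℓ_T] at hl
    rw [Θ_ts_b hm, Θ_ts_c hk, Θ_ss_c hkm hnb', Θ_st_c hk]
    simp only [mul_assoc]
    -- H : T b * (Sg m * d) = Sg k * e
    obtain ⟨ρ₁, h1, he0⟩ := rev_ts_c hstar hk (by simp only [ℓ_mul, ℓ_Sg]; omega) H
    -- h1 : Sg m * d = Sg k * ρ₁ ; he0 : e = T b * ρ₁
    have L1 := congrArg ℓ h1; simp only [ℓ_mul, ℓ_Sg, ℓ_T] at L1
    obtain ⟨ρ₂, hd0, h2⟩ := rev_ss_c hstar hmk hbr (by omega) h1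
    -- hd0 : d = Sg k * ρ₂ ; h2 : ρ₁ = Sg m * ρ₂
    rw [h2] at he0
    refine ⟨Sg m * (T b * ρ₂), ?_, ?_⟩
    · rw [hd0, tsc b (by omega : 3 ≤ k.val) ρ₂, ssc hmk hbr (T b * ρ₂)]
    · rw [he0, ← tst b hm ρ₂]
  · -- C6-4 : ¬m<3, k<3, braid
    rw [Θ_st_c hm] at hl H
    rw [Θ_ss_b hmk hbr] at H
    simp only [mul_assoc] at H
    simp only [ℓ_mul, ℓ_T] at hl
    rw [Θ_ts_c hm, Θ_ts_b hk, Θ_ss_b hkm (isBraid_symm hbr), Θ_st_b hk]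
    simp only [mul_assoc]
    -- H : T b * d = Sg k * (Sg m * e)
    obtain ⟨ρ₁, hd0, h1⟩ := rev_ts_b hstar hk (by omega) H
    -- hd0 : d = Sg k * (T b * ρ₁) ; h1 : Sg m * e = T b * (Sg k * ρ₁)
    have L0 := congrArg ℓ hd0; simp only [ℓ_mul, ℓ_Sg, ℓ_T] at L0
    have L1 := congrArg ℓ h1; simp only [ℓ_mul, ℓ_Sg, ℓ_T] at L1
    obtain ⟨ρ₂, h2, he0⟩ := rev_ts_c hstar hm (by simp only [ℓ_mul, ℓ_Sg]; omega) h1.symm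
    -- h2 : Sg k * ρ₁ = Sg m * ρ₂ ; he0 : e = T b * ρ₂
    have L2 := congrArg ℓ h2; simp only [ℓ_mul, ℓ_Sg, ℓ_T] at L2
    obtain ⟨ρ₃, h3, h4⟩ := rev_ss_b hstar hkm (isBraid_symm hbr) (by omega) h2
    -- h3 : ρ₁ = Sg m * (Sg k * ρ₃) ; h4 : ρ₂ = Sg k * (Sg m * ρ₃)
    rw [h3] at hd0
    rw [h4] at he0
    refine ⟨Sg m * (Sg k * (T b * ρ₃)), ?_, ?_⟩
    · rw [hd0, tsc b (by omega : 3 ≤ m.val) (Sg k * ρ₃), ssb hbr (T b * (Sg k * ρ₃)),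
        ← tst b hk ρ₃, ← tsc b (by omega : 3 ≤ m.val) (Sg k * (T b * ρ₃))]
    · rw [he0, ← tst b hk (Sg m * ρ₃), tsc b (by omega : 3 ≤ m.val) ρ₃,
        ← tsc b (by omega : 3 ≤ m.val) (Sg k * (Sg m * (T b * ρ₃))), ssb hbr (T b * ρ₃)]
  · -- C6-5 : ¬m<3, k<3, comm
    have hnb' := not_isBraid_symm hbr
    rw [Θ_st_c hm] at hl H
    rw [Θ_ss_c hmk hbr] at H
    simp only [ℓ_mul, ℓ_T] at hl
    rw [Θ_ts_c hm, Θ_ts_b hk, Θ_ss_c hkm hnb', Θ_st_b hk]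
    simp only [mul_assoc]
    -- H : T b * d = Sg k * e
    obtain ⟨ρ, hd0, he0⟩ := rev_ts_b hstar hk (by omega) H
    refine ⟨Sg m * ρ, ?_, ?_⟩
    · rw [hd0, ssc hmk hbr (T b * ρ), ← tsc b (by omega : 3 ≤ m.val) ρ]
    · rw [he0, ← tsc b (by omega : 3 ≤ m.val) (Sg k * ρ), ssc hmk hbr ρ]
  · -- C6-6 : ¬m<3, ¬k<3, braid
    rw [Θ_st_c hm] at hl H
    rw [Θ_ss_b hmk hbr] at H
    simp only [mul_assoc] at H
    simp only [ℓ_mul, ℓ_T] at hl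
    rw [Θ_ts_c hm, Θ_ts_c hk, Θ_ss_b hkm (isBraid_symm hbr), Θ_st_c hk]
    simp only [mul_assoc]
    -- H : T b * d = Sg k * (Sg m * e)
    obtain ⟨ρ₁, hd0, h1⟩ := rev_ts_c hstar hk (by omega) H
    -- hd0 : d = Sg k * ρ₁ ; h1 : Sg m * e = T b * ρ₁
    have L0 := congrArg ℓ hd0; simp only [ℓ_mul, ℓ_Sg, ℓ_T] at L0
    have L1 := congrArg ℓ h1; simp only [ℓ_mul, ℓ_Sg, ℓ_T] at L1
    obtain ⟨ρ₂, h2, he0⟩ := rev_ts_c hstar hm (by omega) h1.symm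
    -- h2 : ρ₁ = Sg m * ρ₂ ; he0 : e = T b * ρ₂
    rw [h2] at hd0
    refine ⟨Sg m * (Sg k * ρ₂), ?_, ?_⟩
    · rw [hd0, ssb hbr ρ₂]
    · rw [he0, ← tsc b (by omega : 3 ≤ k.val) ρ₂,
        ← tsc b (by omega : 3 ≤ m.val) (Sg k * ρ₂)]
  · -- C6-7 : ¬m<3, ¬k<3, comm
    have hnb' := not_isBraid_symm hbr
    rw [Θ_st_c hm] at hl H
    rw [Θ_ss_c hmk hbr] at H
    simp only [ℓ_mul, ℓ_T] at hl
    rw [Θ_ts_c hm, Θ_ts_c hk, Θ_ss_c hkm hnb', Θ_st_c hk]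
    obtain ⟨ρ, hd0, he0⟩ := rev_ts_c hstar hk (by omega) H
    refine ⟨Sg m * ρ, ?_, ?_⟩
    · rw [hd0, ssc hmk hbr ρ]
    · rw [he0, tsc b (by omega : 3 ≤ m.val) ρ]

end STT


section SSS
variable {N : ℕ}

/-- C8-2 : single braid edge between x₁ and x. -/
lemma sss_edge (hstar : ∀ m, m < N → StarProp m) {m j k : Fin 7}
    (hmj : m ≠ j) (hmk : m ≠ k) (hjk : j ≠ k)
    (bmj : isBraid m j) (bmk : ¬ isBraid m k) (bjk : ¬ isBraid j k) :
    CubeAt N (Sum.inr m) (Sum.inr j) (Sum.inr k) := by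
  intro d e hl H
  rw [Θ_ss_b hmj bmj] at hl H
  rw [Θ_ss_c hmk bmk] at H
  simp only [mul_assoc] at H
  simp only [ℓ_mul, ℓ_Sg] at hl
  rw [Θ_ss_b hmj.symm (isBraid_symm bmj), Θ_ss_c hjk bjk, Θ_ss_c hmk.symm
    (not_isBraid_symm bmk), Θ_ss_c hjk.symm (not_isBraid_symm bjk)]
  simp only [mul_assoc]
  -- H : Sg j * (Sg m * d) = Sg k * e
  obtain ⟨ρ₁, h1, he0⟩ := rev_ss_c hstar hjk bjk (by simp only [ℓ_mul, ℓ_Sg]; omega) H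
  have L1 := congrArg ℓ h1; simp only [ℓ_mul, ℓ_Sg] at L1
  obtain ⟨ρ₂, hd0, h2⟩ := rev_ss_c hstar hmk bmk (by omega) h1
  rw [h2] at he0
  refine ⟨Sg m * (Sg j * ρ₂), ?_, ?_⟩
  · rw [hd0, ssc hjk bjk ρ₂, ssc hmk bmk (Sg j * ρ₂)]
  · rw [he0, ssb bmj ρ₂]

/-- C8-4 : braid path with centre x. -/
lemma sss_path (hstar : ∀ m, m < N → StarProp m) {m j k : Fin 7}
    (hmj : m ≠ j) (hmk : m ≠ k) (hjk : j ≠ k)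
    (bmj : isBraid m j) (bjk : isBraid j k) (bmk : ¬ isBraid m k) :
    CubeAt N (Sum.inr m) (Sum.inr j) (Sum.inr k) := by
  intro d e hl H
  rw [Θ_ss_b hmj bmj] at hl H
  rw [Θ_ss_c hmk bmk] at H
  simp only [mul_assoc] at H
  simp only [ℓ_mul, ℓ_Sg] at hl
  rw [Θ_ss_b hmj.symm (isBraid_symm bmj), Θ_ss_b hjk bjk, Θ_ss_c hmk.symm
    (not_isBraid_symm bmk), Θ_ss_b hjk.symm (isBraid_symm bjk)]
  simp only [mul_assoc]
  -- H : Sg j * (Sg m * d) = Sg k * e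
  obtain ⟨ρ₁, h1, he0⟩ := rev_ss_b hstar hjk bjk (by simp only [ℓ_mul, ℓ_Sg]; omega) H
  -- h1 : Sg m * d = Sg k * (Sg j * ρ₁) ; he0 : e = Sg j * (Sg k * ρ₁)
  have L1 := congrArg ℓ h1; simp only [ℓ_mul, ℓ_Sg] at L1
  obtain ⟨ρ₂, hd0, h2⟩ := rev_ss_c hstar hmk bmk (by omega) h1
  -- hd0 : d = Sg k * ρ₂ ; h2 : Sg j * ρ₁ = Sg m * ρ₂
  have L2 := congrArg ℓ h2; simp only [ℓ_mul, ℓ_Sg] at L2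
  obtain ⟨ρ₃, h3, h4⟩ := rev_ss_b hstar hmj.symm (isBraid_symm bmj) (by omega) h2
  -- h3 : ρ₁ = Sg m * (Sg j * ρ₃) ; h4 : ρ₂ = Sg j * (Sg m * ρ₃)
  rw [h4] at hd0
  rw [h3] at he0
  refine ⟨Sg m * (Sg j * (Sg k * ρ₃)), ?_, ?_⟩
  · rw [hd0, ssb bjk (Sg m * ρ₃), ssc hmk bmk (Sg j * (Sg k * (Sg m * ρ₃))),
      ssc hmk.symm (not_isBraid_symm bmk) ρ₃, ssb (isBraid_symm bmj) (Sg k * ρ₃)]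
  · rw [he0, ssc hmk.symm (not_isBraid_symm bmk) (Sg j * ρ₃),
      ssb bmj (Sg k * (Sg j * ρ₃)), ssb bjk ρ₃, ssc hmk bmk (Sg j * (Sg k * ρ₃))]

/-- C8-3 : braid path with centre x₁. -/
lemma sss_path_ctr (hstar : ∀ m, m < N → StarProp m) {m j k : Fin 7}
    (hmj : m ≠ j) (hmk : m ≠ k) (hjk : j ≠ k)
    (bmj : isBraid m j) (bmk : isBraid m k) (bjk : ¬ isBraid j k) :
    CubeAt N (Sum.inr m) (Sum.inr j) (Sum.inr k) := by
  intro d e hl H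
  rw [Θ_ss_b hmj bmj] at hl H
  rw [Θ_ss_b hmk bmk] at H
  simp only [mul_assoc] at H
  simp only [ℓ_mul, ℓ_Sg] at hl
  rw [Θ_ss_b hmj.symm (isBraid_symm bmj), Θ_ss_c hjk bjk, Θ_ss_b hmk.symm
    (isBraid_symm bmk), Θ_ss_c hjk.symm (not_isBraid_symm bjk)]
  simp only [mul_assoc]
  -- H : Sg j * (Sg m * d) = Sg k * (Sg m * e)
  obtain ⟨ρ₁, h1, h2⟩ := rev_ss_c hstar hjk bjk (by simp only [ℓ_mul, ℓ_Sg]; omega) H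
  -- h1 : Sg m * d = Sg k * ρ₁ ; h2 : Sg m * e = Sg j * ρ₁
  have L1 := congrArg ℓ h1; simp only [ℓ_mul, ℓ_Sg] at L1
  obtain ⟨ρ₂, hd0, h3⟩ := rev_ss_b hstar hmk bmk (by omega) h1
  -- hd0 : d = Sg k * (Sg m * ρ₂) ; h3 : ρ₁ = Sg m * (Sg k * ρ₂)
  have L3 := congrArg ℓ h3; simp only [ℓ_mul, ℓ_Sg] at L3
  rw [h3] at h2
  have L2 := congrArg ℓ h2; simp only [ℓ_mul, ℓ_Sg] at L2
  obtain ⟨ρ₃, h4, he0⟩ := rev_ss_b hstar hmj.symm (isBraid_symm bmj)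
    (by simp only [ℓ_mul, ℓ_Sg]; omega) h2.symm
  -- h4 : Sg m * (Sg k * ρ₂) = Sg m * (Sg j * ρ₃) ; he0 : e = Sg j * (Sg m * ρ₃)
  have h5 := peelS hstar (by simp only [ℓ_mul, ℓ_Sg]; omega) h4
  have L5 := congrArg ℓ h5; simp only [ℓ_mul, ℓ_Sg] at L5
  obtain ⟨ρ₄, h6, h7⟩ := rev_ss_c hstar hjk.symm (not_isBraid_symm bjk) (by omega) h5
  -- h6 : ρ₂ = Sg j * ρ₄ ; h7 : ρ₃ = Sg k * ρ₄
  rw [h6] at hd0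
  rw [h7] at he0
  refine ⟨Sg m * (Sg k * (Sg j * (Sg m * ρ₄))), ?_, ?_⟩
  · rw [hd0, ssc hjk bjk (Sg m * (Sg j * ρ₄)), ssb (isBraid_symm bmj) ρ₄,
      ssb bmk (Sg j * (Sg m * ρ₄))]
  · rw [he0, ssc hjk.symm (not_isBraid_symm bjk) (Sg m * (Sg k * ρ₄)),
      ssb (isBraid_symm bmk) ρ₄, ssb bmj (Sg k * (Sg m * ρ₄)),
      ssc hjk bjk (Sg m * ρ₄)]

/-- C8-1 : single braid edge between x and y. -/
lemma sss_far (hstar : ∀ m, m < N → StarProp m) {m j k : Fin 7}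
    (hmj : m ≠ j) (hmk : m ≠ k) (hjk : j ≠ k)
    (bmj : ¬ isBraid m j) (bmk : ¬ isBraid m k) (bjk : isBraid j k) :
    CubeAt N (Sum.inr m) (Sum.inr j) (Sum.inr k) := by
  intro d e hl H
  rw [Θ_ss_c hmj bmj] at hl H
  rw [Θ_ss_c hmk bmk] at H
  simp only [ℓ_mul, ℓ_Sg] at hl
  rw [Θ_ss_c hmj.symm (not_isBraid_symm bmj), Θ_ss_b hjk bjk, Θ_ss_c hmk.symm
    (not_isBraid_symm bmk), Θ_ss_b hjk.symm (isBraid_symm bjk)]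
  simp only [mul_assoc]
  -- H : Sg j * d = Sg k * e
  obtain ⟨ρ, hd0, he0⟩ := rev_ss_b hstar hjk bjk (by omega) H
  refine ⟨Sg m * ρ, ?_, ?_⟩
  · rw [hd0, ssc hmk bmk (Sg j * ρ), ssc hmj bmj ρ]
  · rw [he0, ssc hmj bmj (Sg k * ρ), ssc hmk bmk ρ]

/-- C8-0 : no braid edges. -/
lemma sss_none (hstar : ∀ m, m < N → StarProp m) {m j k : Fin 7}
    (hmj : m ≠ j) (hmk : m ≠ k) (hjk : j ≠ k)
    (bmj : ¬ isBraid m j) (bmk : ¬ isBraid m k) (bjk : ¬ isBraid j k) :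
    CubeAt N (Sum.inr m) (Sum.inr j) (Sum.inr k) := by
  intro d e hl H
  rw [Θ_ss_c hmj bmj] at hl H
  rw [Θ_ss_c hmk bmk] at H
  simp only [ℓ_mul, ℓ_Sg] at hl
  rw [Θ_ss_c hmj.symm (not_isBraid_symm bmj), Θ_ss_c hjk bjk, Θ_ss_c hmk.symm
    (not_isBraid_symm bmk), Θ_ss_c hjk.symm (not_isBraid_symm bjk)]
  obtain ⟨ρ, hd0, he0⟩ := rev_ss_c hstar hjk bjk (by omega) H
  refine ⟨Sg m * ρ, ?_, ?_⟩
  · rw [hd0, ssc hmk bmk ρ]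
  · rw [he0, ssc hmj bmj ρ]

lemma cube_sss (hstar : ∀ m, m < N → StarProp m) {m j k : Fin 7}
    (hmj : m ≠ j) (hmk : m ≠ k) (hjk : j ≠ k) :
    CubeAt N (Sum.inr m) (Sum.inr j) (Sum.inr k) := by
  by_cases bmj : isBraid m j <;> by_cases bmk : isBraid m k <;> by_cases bjk : isBraid j k
  · exact absurd bjk (fun h => no_triangle m j k bmj bmk h)
  · exact sss_path_ctr hstar hmj hmk hjk bmj bmk bjk
  · exact sss_path hstar hmj hmk hjk bmj bjk bmk
  · exact sss_edge hstar hmj hmk hjk bmj bmk bjk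
  · exact cubeAt_swap (sss_path hstar hmk hmj hjk.symm bmk (isBraid_symm bjk) bmj)
  · exact cubeAt_swap (sss_edge hstar hmk hmj hjk.symm bmk bmj
      (fun h => bjk (isBraid_symm h)))
  · exact sss_far hstar hmj hmk hjk bmj bmk bjk
  · exact sss_none hstar hmj hmk hjk bmj bmk bjk

end SSS

/-- The cube condition lemma. -/
lemma cube {N : ℕ} (hstar : ∀ m, m < N → StarProp m) (x₁ x y : S) (d e : M)
    (hlen : ℓ (Θ x₁ x * d) < N)
    (H : Θ x₁ x * d = Θ x₁ y * e) :
    ∃ w, Θ x x₁ * d = Θ x y * w ∧ Θ y x₁ * e = Θ y x * w := by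
  by_cases h1 : x₁ = x
  · subst h1; exact cubeAt_left x₁ y d e hlen H
  by_cases h2 : x₁ = y
  · subst h2; exact cubeAt_right x x₁ d e hlen H
  by_cases h3 : x = y
  · subst h3; exact cubeAt_xy hstar x₁ x d e hlen H
  rcases x₁ with a | m <;> rcases x with b | j <;> rcases y with c | k
  · exact cube_ttt hstar (by simpa using h1) (by simpa using h2) (by simpa using h3)
      d e hlen H
  · exact cube_tts hstar (by simpa using h1) d e hlen H
  · exact cubeAt_swap (cube_tts hstar (by simpa using h2)) d e hlen H
  · exact cube_tss hstar (by simpa using h3) d e hlen H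
  · exact cube_stt hstar (by simpa using h3) d e hlen H
  · exact cube_sts hstar (by simpa using h2) d e hlen H
  · exact cubeAt_swap (cube_sts hstar (by simpa using h1)) d e hlen H
  · exact cube_sss hstar (by simpa using h1) (by simpa using h2) (by simpa using h3)
      d e hlen H

lemma head_eq {x y : S} {u v : W} (h : FreeMonoid.of x * u = FreeMonoid.of y * v) :
    x = y ∧ u = v := by
  have h1 := congrArg FreeMonoid.toList h
  simp only [FreeMonoid.toList_mul, FreeMonoid.toList_of] at h1
  rw [List.singleton_append, List.singleton_append] at h1
  injection h1 with h1 h2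
  exact ⟨h1, FreeMonoid.toList.injective h2⟩

lemma onestep_length {a b : W} (h : OneStep a b) : a.length = b.length :=
  chain_length (Relation.ReflTransGen.single h)

lemma θ_len_sym (x y : S) : (θ x y).length = (θ y x).length := by
  have h := chain_length (pi_eq_iff_chain.mp (θ_rel x y))
  have h1 : (FreeMonoid.of x : W).length = 1 := rfl
  have h2 : (FreeMonoid.of y : W).length = 1 := rfl
  simp only [FreeMonoid.length_mul] at h
  omega

lemma word_decomp (l : W) : l = 1 ∨ ∃ x0 l', l = FreeMonoid.of x0 * l' := by
  cases hl : FreeMonoid.toList l with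
  | nil =>
      left; apply FreeMonoid.toList.injective; simpa using hl
  | cons a as =>
      right
      exact ⟨a, FreeMonoid.ofList as, by apply FreeMonoid.toList.injective; simp [hl]⟩

lemma star : ∀ N, StarProp N := by
  intro N
  induction N using Nat.strong_induction_on with
  | _ N IH =>
  intro x y u v hlen heq
  obtain ⟨u0, rfl⟩ := pi_surj u
  obtain ⟨v0, rfl⟩ := pi_surj v
  have hch : Chain (FreeMonoid.of x * u0) (FreeMonoid.of y * v0) := by
    apply pi_eq_iff_chain.mp
    simpa [map_mul, X] using heq
  have hlen0 : (FreeMonoid.of x * u0).length ≤ N := by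
    have h1 : ℓ (π u0) = u0.length := ℓ_pi u0
    have h2 : (FreeMonoid.of x : W).length = 1 := rfl
    simp only [FreeMonoid.length_mul]
    omega
  clear heq hlen
  have key : ∀ (a : W), Chain a (FreeMonoid.of y * v0) → a.length ≤ N →
      ∀ (x : S) (u0 : W), a = FreeMonoid.of x * u0 →
      ∃ w, π u0 = Θ x y * w ∧ π v0 = Θ y x * w := by
    intro a hcha
    induction hcha using Relation.ReflTransGen.head_induction_on with
    | refl =>
        intro _ x u0 heq
        obtain ⟨rfl, rfl⟩ := head_eq heq.symm
        exact ⟨π u0, by rw [Θ_self, one_mul], by rw [Θ_self, one_mul]⟩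
    | head h' hch2 ih =>
        rename_i a c
        intro hlenA x u0 ha
        have hlenC : c.length ≤ N := by
          rw [← onestep_length h']; exact hlenA
        obtain ⟨l, p, q, r, hpq, hap, hcq⟩ := h'
        have hpiq : π p = π q := by
          rcases hpq with h | h
          · exact rel_pi h
          · exact (rel_pi h).symm
        have hform : p = q ∨ ∃ x1 x2 : S, x1 ≠ x2 ∧
            p = FreeMonoid.of x1 * θ x1 x2 ∧ q = FreeMonoid.of x2 * θ x2 x1 := by
          rcases hpq with h | h
          · exact relform h
          · rcases relform h with h1 | ⟨x1, x2, hne, h1, h2⟩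
            · exact Or.inl h1.symm
            · exact Or.inr ⟨x2, x1, hne.symm, h2, h1⟩
        rcases word_decomp l with rfl | ⟨x0, l', rfl⟩
        · -- the rewrite happens at the head
          rcases hform with rfl | ⟨x1, x2, hne, rfl, rfl⟩
          · -- trivial step
            exact ih hlenC x u0 (by rw [← ha, hap, hcq])
          · rw [one_mul, mul_assoc] at hap hcq
            rw [ha] at hap
            obtain ⟨rfl, rfl⟩ := head_eq hap
            obtain ⟨w', hw1, hw2⟩ := ih hlenC x2 (θ x2 x * r) hcq
            rw [map_mul] at hw1
            have hcu : Θ x2 x * π r = Θ x2 y * w' := hw1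
            have hlencube : ℓ (Θ x2 x * π r) < N := by
              have e1 : ℓ (Θ x2 x * π r) = (θ x2 x).length + r.length := by
                rw [ℓ_mul, Θ, ℓ_pi, ℓ_pi]
              have e2 : (θ x2 x).length = (θ x x2).length := θ_len_sym x2 x
              have e3 : (FreeMonoid.of x * (θ x x2 * r)).length
                  = 1 + ((θ x x2).length + r.length) := by
                simp [FreeMonoid.length_mul]
              rw [ha] at hlenA
              omega
            obtain ⟨w, hg1, hg2⟩ := cube IH x2 x y (π r) w' hlencube hcu
            refine ⟨w, ?_, ?_⟩
            · rw [map_mul, ← Θ]; exact hg1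
            · rw [hw2, hg2]
        · -- the rewrite happens strictly inside the tail
          rw [mul_assoc, mul_assoc] at hap hcq
          rw [ha] at hap
          obtain ⟨rfl, rfl⟩ := head_eq hap
          obtain ⟨w, h1, h2⟩ := ih hlenC x (l' * (q * r)) hcq
          refine ⟨w, ?_, h2⟩
          rw [← h1, map_mul, map_mul, map_mul, map_mul, hpiq]
  obtain ⟨w, h1, h2⟩ := key (FreeMonoid.of x * u0) hch hlen0 x u0 rfl
  exact ⟨w, h1, h2⟩



lemma left_cancel_X (x : S) {u v : M} (h : X x * u = X x * v) : u = v := by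
  obtain ⟨w, h1, h2⟩ := star (1 + ℓ u) x x u v le_rfl h
  rw [h1, h2]

lemma left_cancel (a u v : M) (h : a * u = a * v) : u = v := by
  obtain ⟨a0, rfl⟩ := pi_surj a
  induction a0 using FreeMonoid.inductionOn' generalizing u v with
  | one => simpa using h
  | of_mul x b ih =>
      rw [map_mul, mul_assoc, mul_assoc] at h
      exact ih _ _ (left_cancel_X x h)

/-- The index-negating reversal map on generators. -/
def σ : S → S
  | Sum.inl i => Sum.inl (-i)
  | Sum.inr j => Sum.inr j

lemma Φrels : ∀ a b : FreeMonoid S, rels a b →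
    FreeMonoid.lift (fun x => MulOpposite.op (X (σ x))) a =
    FreeMonoid.lift (fun x => MulOpposite.op (X (σ x))) b := by
  intro a b h
  rcases h with ⟨i, j, hj, rfl, rfl⟩ | ⟨i, j, rfl, rfl⟩ | ⟨q, hq, rfl, rfl⟩ |
      ⟨i, j, hne, h1, h2, rfl, rfl⟩ | ⟨i, j, hj, rfl, rfl⟩ <;>
    apply MulOpposite.unop_injective <;>
    simp only [t, s, map_mul, FreeMonoid.lift_eval_of, MulOpposite.unop_mul,
      MulOpposite.unop_op, σ, X_inl, X_inr]
  · rw [← mul_assoc, ← mul_assoc, rel_tst _ _ hj]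
  · rw [show -(i-1) = (1:ℤ)-i by ring, show (-i : ℤ) = 1-i-1 by ring,
      show -(j-1) = (1:ℤ)-j by ring, show (-j : ℤ) = 1-j-1 by ring]
    exact rel_tt (1-i) (1-j)
  · rw [← mul_assoc, ← mul_assoc, rel_ss_braid (Or.inl hq)]
  · exact (rel_ss_comm hne (fun hc => hc.elim h1 h2)).symm
  · exact (rel_ts_comm (-i) hj).symm

noncomputable def Φ : M →* Mᵐᵒᵖ :=
  PresentedMonoid.lift (fun x => MulOpposite.op (X (σ x))) Φrels

lemma Φ_X (x : S) : Φ (X x) = MulOpposite.op (X (σ x)) := by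
  have : X x = PresentedMonoid.of rels x := rfl
  rw [this, Φ, PresentedMonoid.lift_of]

lemma σσ (x : S) : σ (σ x) = x := by
  cases x <;> simp [σ]

lemma Φ_inj : Function.Injective Φ := by
  have key : ∀ m : M, MulOpposite.unop (Φ (MulOpposite.unop (Φ m))) = m := by
    intro m
    obtain ⟨a, rfl⟩ := pi_surj m
    induction a using FreeMonoid.inductionOn' with
    | one => simp
    | of_mul x b ih =>
        have hx : π (FreeMonoid.of x) = X x := rfl
        rw [map_mul, hx]
        simp only [map_mul, Φ_X, MulOpposite.unop_mul, MulOpposite.unop_op, σσ, ih]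
  intro u v huv
  have := key u
  rw [huv, key v] at this
  exact this.symm

lemma right_cancel (a u v : M) (h : u * a = v * a) : u = v := by
  apply Φ_inj
  have h2 := congrArg Φ h
  rw [map_mul, map_mul] at h2
  have h3 := congrArg MulOpposite.unop h2
  rw [MulOpposite.unop_mul, MulOpposite.unop_mul] at h3
  have := left_cancel _ _ _ h3
  exact MulOpposite.unop_injective this

theorem cancellative :
    ∀ u v w : M, (u * v = u * w → v = w) ∧ (v * u = w * u → v = w) := by
  intro u v w
  exact ⟨left_cancel u v w, right_cancel u v w⟩

end EllipticE7Monoid
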